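/- Let f : ℝ^d → ℝ be C², coercive, with ‖∇f(x)‖² ≤ c_f f(x) for all x and some c_f > 0, and suppose f ≥ 0. Fix r > 0 and positive constants a, b with a/b > max(1/2, r(c_f − 1)). Define V(x,y) = (a + b r) f(x) + (a/(2r)) ‖y‖² − b ⟨∇f(x), y⟩. Then there exists C₁ > 0 such that for all x, y ∈ ℝ^d, V(x,y) ≥ C₁ (f(x) + ‖y‖²/r). -/

import Mathlib

/-- Lemma 2.1 (i) (exponential memory case `r_n = r`): coercivity of the hypocoercive
Lyapunov function `V(x,y) = (a + br) f(x) + (a/(2r))‖y‖² − b⟨∇f(x), y⟩`. -/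
theorem stmt_6 {d : ℕ} (f : EuclideanSpace ℝ (Fin d) → ℝ)
    (hf : ContDiff ℝ 2 f)
    (hcoer : Filter.Tendsto f (Filter.cocompact _) Filter.atTop)
    (hfnonneg : ∀ x, 0 ≤ f x)
    (c_f : ℝ) (hc : 0 < c_f)
    (hgrad : ∀ x, ‖gradient f x‖ ^ 2 ≤ c_f * f x)
    (r a b : ℝ) (hr : 0 < r) (ha : 0 < a) (hb : 0 < b)
    (hab : max (1 / 2) (r * (c_f - 1)) < a / b) :
    ∃ C₁ > 0, ∀ x y : EuclideanSpace ℝ (Fin d),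
      C₁ * (f x + ‖y‖ ^ 2 / r) ≤
        (a + b * r) * f x + a / (2 * r) * ‖y‖ ^ 2
          - b * (inner ℝ (gradient f x) y : ℝ) := by
  have h1 : (1:ℝ)/2 < a/b := lt_of_le_of_lt (le_max_left _ _) hab
  have h2 : r * (c_f - 1) < a/b := lt_of_le_of_lt (le_max_right _ _) hab
  have h1' : b < 2 * a := by
    have := (lt_div_iff₀ hb).mp h1; linarith
  have h2' : r * (c_f - 1) * b < a := (lt_div_iff₀ hb).mp h2
  set ε : ℝ := (b*r/a + 2*(a+b*r)/(b*c_f)) / 2 with hεdef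
  have hgap : b*r/a < 2*(a+b*r)/(b*c_f) := by
    rw [div_lt_div_iff₀ ha (mul_pos hb hc)]
    nlinarith [mul_pos hr hb, mul_pos ha hr, sq_nonneg a, mul_pos ha hb]
  have hε1 : b*r/a < ε := by rw [hεdef]; linarith
  have hε2 : ε < 2*(a+b*r)/(b*c_f) := by rw [hεdef]; linarith
  have hεpos : 0 < ε := lt_trans (div_pos (mul_pos hb hr) ha) hε1
  set α : ℝ := a + b*r - b*ε*c_f/2 with hα
  set β : ℝ := a/(2*r) - b/(2*ε) with hβ
  have hαpos : 0 < α := by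
    have := (lt_div_iff₀ (mul_pos hb hc)).mp hε2
    rw [hα]; nlinarith
  have hβpos : 0 < β := by
    have := (div_lt_iff₀ ha).mp hε1
    rw [hβ, sub_pos, div_lt_div_iff₀ (by positivity) (by positivity)]
    nlinarith
  refine ⟨min α (β * r), lt_min hαpos (mul_pos hβpos hr), fun x y => ?_⟩
  set u := ‖gradient f x‖ with hu
  set v := ‖y‖ with hv
  have hunn : 0 ≤ u := norm_nonneg _
  have hvnn : 0 ≤ v := norm_nonneg _
  have key : b * (u*v) ≤ b*ε/2 * u^2 + b/(2*ε) * v^2 := by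
    have hsq : 2*ε*(u*v) ≤ ε^2*u^2 + v^2 := by nlinarith [sq_nonneg (ε*u - v)]
    have hm := mul_le_mul_of_nonneg_left hsq
      (le_of_lt (by positivity : (0:ℝ) < b/(2*ε)))
    calc b*(u*v) = b/(2*ε) * (2*ε*(u*v)) := by field_simp
      _ ≤ b/(2*ε) * (ε^2*u^2 + v^2) := hm
      _ = b*ε/2*u^2 + b/(2*ε)*v^2 := by field_simp
  have hinner : b * (inner ℝ (gradient f x) y : ℝ) ≤
      b*ε*c_f/2 * f x + b/(2*ε) * v^2 := by
    have h3 : (inner ℝ (gradient f x) y : ℝ) ≤ u * v := real_inner_le_norm _ _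
    have h3' : b * (inner ℝ (gradient f x) y : ℝ) ≤ b * (u*v) :=
      mul_le_mul_of_nonneg_left h3 hb.le
    have h5 : u^2 ≤ c_f * f x := hgrad x
    have h6 : b*ε/2 * u^2 ≤ b*ε/2 * (c_f * f x) :=
      mul_le_mul_of_nonneg_left h5 (by positivity)
    have h7 : b*ε/2 * (c_f * f x) = b*ε*c_f/2 * f x := by ring
    linarith
  have hfx := hfnonneg x
  have hC1 : min α (β*r) * f x ≤ α * f x :=
    mul_le_mul_of_nonneg_right (min_le_left _ _) hfx
  have hC2 : min α (β*r) * (v^2 / r) ≤ β * v^2 := by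
    calc min α (β*r) * (v^2 / r) ≤ (β*r) * (v^2 / r) :=
          mul_le_mul_of_nonneg_right (min_le_right _ _) (by positivity)
      _ = β * v^2 := by field_simp
  have e1 : α * f x = (a+b*r)*f x - b*ε*c_f/2 * f x := by rw [hα]; ring
  have e2 : β * v^2 = a/(2*r)*v^2 - b/(2*ε)*v^2 := by rw [hβ]; ring
  have e3 : min α (β*r) * (f x + v^2/r)
      = min α (β*r) * f x + min α (β*r) * (v^2/r) := by ring
  clear_value α β
  calc min α (β*r) * (f x + v^2/r)
      = min α (β*r) * f x + min α (β*r) * (v^2/r) := e3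
    _ ≤ (a + b * r) * f x + a/(2*r) * v^2 - b * (inner ℝ (gradient f x) y : ℝ) := by
        linarith
    _ = _ := by rw [hv]
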